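/- Define 𝒬_0(x) = 1 and 𝒬_n(x) = Σ_{j=0}^{⌊(n-1)/2⌋} (-1)^j (C(n-1,j) - C(n-1,j-1)) x^{n-2j} for n ≥ 1. Then for every n ≥ 1, x^n = Σ_{k=0}^{⌊(n-1)/2⌋} C(n-1-k, k) · 𝒬_{n-2k}(x). -/

import Mathlib

open Polynomial Finset

/-- The binomial coefficient `C(a,b)` for integer arguments, with the convention that
`C(a,b) = 0` unless `0 ≤ b ≤ a`. -/
def Cb (a b : ℤ) : ℚ :=
  if 0 ≤ b ∧ b ≤ a then (a.toNat.choose b.toNat : ℚ) else 0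


lemma Cb_coe (A B : ℕ) : Cb A B = A.choose B := by
  unfold Cb
  split_ifs with h
  · simp
  · have : A < B := by omega
    rw [Nat.choose_eq_zero_of_lt this, Nat.cast_zero]

lemma Cb_neg {a b : ℤ} (hb : b < 0) : Cb a b = 0 := by
  unfold Cb; rw [if_neg]; omega

lemma Cb_zero_right {a : ℤ} (ha : 0 ≤ a) : Cb a 0 = 1 := by
  unfold Cb; rw [if_pos ⟨le_refl 0, ha⟩]; simp

lemma Cb_pascal (a b : ℤ) (ha : 1 ≤ a) : Cb a b = Cb (a-1) b + Cb (a-1) (b-1) := by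
  obtain ⟨A, rfl⟩ : ∃ A : ℕ, a = (A : ℤ) + 1 := ⟨(a-1).toNat, by omega⟩
  rcases lt_or_ge b 0 with hb | hb
  · rw [Cb_neg hb, Cb_neg hb, Cb_neg (by omega), add_zero]
  obtain ⟨B, rfl⟩ : ∃ B : ℕ, b = (B : ℤ) := ⟨b.toNat, by omega⟩
  rcases Nat.eq_zero_or_pos B with rfl | hB
  · simp only [Nat.cast_zero, add_sub_cancel_right]
    rw [Cb_zero_right (by positivity), Cb_zero_right (by positivity), Cb_neg (by norm_num)]
    norm_num
  obtain ⟨B, rfl⟩ : ∃ B' : ℕ, B = B' + 1 := ⟨B - 1, by omega⟩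
  have h1 : (A : ℤ) + 1 = ((A + 1 : ℕ) : ℤ) := by push_cast; ring
  have h2 : ((A + 1 : ℕ) : ℤ) - 1 = ((A : ℕ) : ℤ) := by push_cast; ring
  have h3 : ((B + 1 : ℕ) : ℤ) - 1 = ((B : ℕ) : ℤ) := by push_cast; ring
  rw [h1, h2, h3, Cb_coe, Cb_coe, Cb_coe, Nat.choose_succ_succ']
  push_cast; ring

lemma diffL (m : ℕ) : ∀ (N r : ℤ), (m : ℤ) ≤ N →
    ∑ k ∈ range (m+1), (-1:ℚ)^k * (m.choose k) * Cb (N - k) r = Cb (N - m) (r - m) := by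
  induction m with
  | zero => intro N r _; simp
  | succ m ih =>
    intro N r hN
    have key : ∀ k ∈ range (m+1),
        (-1:ℚ)^(k+1) * ((m+1).choose (k+1)) * Cb (N - ((k+1:ℕ):ℤ)) r
          = ((-1:ℚ)^(k+1) * (m.choose (k+1)) * Cb (N - ((k+1:ℕ):ℤ)) r)
            + (-((-1:ℚ)^k * (m.choose k) * Cb ((N-1) - k) r)) := by
      intro k _
      rw [Nat.choose_succ_succ',
        show (((k+1:ℕ)):ℤ) = (k:ℤ)+1 by push_cast; ring,
        show N - ((k:ℤ)+1) = (N-1) - k by ring]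
      push_cast; ring
    rw [Finset.sum_range_succ' _ (m+1), Finset.sum_congr rfl key, Finset.sum_add_distrib]
    have e1 : ∑ k ∈ range (m+1), ((-1:ℚ)^(k+1) * (m.choose (k+1)) * Cb (N - ((k+1:ℕ):ℤ)) r)
        + (-1:ℚ)^0 * ((m+1).choose 0) * Cb (N - ((0:ℕ):ℤ)) r
        = ∑ k ∈ range (m+2), (-1:ℚ)^k * (m.choose k) * Cb (N - k) r := by
      rw [Finset.sum_range_succ' _ (m+1)]
      norm_num
    have e2 : ∑ k ∈ range (m+2), (-1:ℚ)^k * (m.choose k) * Cb (N - k) r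
        = Cb (N - m) (r - m) := by
      rw [Finset.sum_range_succ, Nat.choose_succ_self]
      simp only [Nat.cast_zero, mul_zero, zero_mul, add_zero]
      exact ih N r (by push_cast at hN ⊢; omega)
    have e3 : ∑ k ∈ range (m+1), -((-1:ℚ)^k * (m.choose k) * Cb ((N-1) - k) r)
        = - Cb ((N-1) - m) (r - m) := by
      rw [Finset.sum_neg_distrib, ih (N-1) r (by push_cast at hN ⊢; omega)]
    rw [add_right_comm, e1, e2, e3]
    rw [Cb_pascal (N - m) (r - m) (by push_cast at hN ⊢; omega)]
    push_cast
    rw [show N - ((m:ℤ)+1) = N - m - 1 by ring, show r - ((m:ℤ)+1) = r - m - 1 by ring,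
      show N - (m:ℤ) - 1 = (N-1) - m by ring]
    ring

lemma negpow (k m : ℕ) (h : k ≤ m) : (-1:ℚ)^(m-k) = (-1)^m * (-1)^k := by
  have h1 : (-1:ℚ)^(m-k) * (-1)^k = (-1)^m := by
    rw [← pow_add]; congr 1; omega
  have hk : ((-1:ℚ)^k) * ((-1:ℚ)^k) = 1 := by
    rw [← pow_add, ← two_mul, pow_mul]; norm_num
  calc (-1:ℚ)^(m-k) = (-1:ℚ)^(m-k) * (((-1:ℚ)^k) * ((-1:ℚ)^k)) := by rw [hk, mul_one]
    _ = ((-1:ℚ)^(m-k) * (-1)^k) * (-1)^k := by ring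
    _ = (-1)^m * (-1)^k := by rw [h1]

lemma key (n m : ℕ) (h : 2*m+1 ≤ n) :
    ∑ k ∈ range (m+1),
      Cb ((n:ℤ)-1-k) k * ((-1:ℚ)^(m-k) *
        (Cb ((n-2*k-1 : ℕ) : ℤ) ((m-k : ℕ) : ℤ) - Cb ((n-2*k-1 : ℕ) : ℤ) (((m-k : ℕ) : ℤ) - 1)))
      = if m = 0 then 1 else 0 := by
  rcases Nat.eq_zero_or_pos m with rfl | hm
  · rw [Finset.sum_range_one]
    norm_num
    rw [Cb_zero_right (a := ((n:ℤ)-1)) (by omega),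
      Cb_zero_right (a := ((n-1:ℕ):ℤ)) (by positivity),
      Cb_neg (a := ((n-1:ℕ):ℤ)) (b := -1) (by norm_num)]
    norm_num
  obtain ⟨M, rfl⟩ : ∃ M : ℕ, m = M + 1 := ⟨m - 1, by omega⟩
  rw [if_neg (by omega)]
  have point : ∀ k ∈ range (M+1+1),
      Cb ((n:ℤ)-1-k) k * ((-1:ℚ)^(M+1-k) *
        (Cb ((n-2*k-1 : ℕ) : ℤ) ((M+1-k : ℕ) : ℤ) - Cb ((n-2*k-1 : ℕ) : ℤ) (((M+1-k : ℕ) : ℤ) - 1)))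
      = ((-1:ℚ)^(M+1-k) * ((M+1).choose k) * Cb ((n:ℤ)-1-k) ((M+1 : ℕ):ℤ))
        - ((-1:ℚ)^(M+1-k) * (M.choose k) * Cb ((n:ℤ)-1-k) ((M:ℕ):ℤ)) := by
    intro k hk
    rw [Finset.mem_range] at hk
    have hkm : k ≤ M+1 := by omega
    rcases eq_or_lt_of_le hkm with rfl | hklt
    · have h0 : M+1 - (M+1) = 0 := by omega
      rw [h0, Nat.cast_zero,
        Cb_zero_right (a := ((n-2*(M+1)-1:ℕ):ℤ)) (by positivity),
        show ((0:ℤ)-1) = (-1:ℤ) by ring,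
        Cb_neg (a := ((n-2*(M+1)-1:ℕ):ℤ)) (by norm_num),
        Nat.choose_self, Nat.choose_succ_self]
      norm_num
    · have hk1 : k ≤ M := by omega
      have e0 : ((n:ℤ)-1-k) = ((n-1-k : ℕ) : ℤ) := by omega
      have e1 : ((M+1 - k : ℕ) : ℤ) - 1 = ((M+1 - k - 1 : ℕ) : ℤ) := by omega
      rw [e0, e1, Cb_coe, Cb_coe, Cb_coe, Cb_coe, Cb_coe]
      have h1 : ((n-1-k).choose k : ℚ) * ((n-2*k-1).choose (M+1-k)) = ((n-1-k).choose (M+1)) * ((M+1).choose k) := by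
        have := Nat.choose_mul (n := n-1-k) (k := M+1) (s := k) hkm
        rw [show n-1-k-k = n-2*k-1 by omega] at this
        exact_mod_cast congrArg (Nat.cast : ℕ → ℚ) this.symm
      have h2 : ((n-1-k).choose k : ℚ) * ((n-2*k-1).choose (M+1-k-1)) = ((n-1-k).choose M) * (M.choose k) := by
        have := Nat.choose_mul (n := n-1-k) (k := M) (s := k) hk1
        rw [show n-1-k-k = n-2*k-1 by omega, show M - k = M+1-k-1 by omega] at this
        exact_mod_cast congrArg (Nat.cast : ℕ → ℚ) this.symm
      linear_combination ((-1:ℚ)^(M+1-k)) * h1 - ((-1:ℚ)^(M+1-k)) * h2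
  rw [Finset.sum_congr rfl point, Finset.sum_sub_distrib]
  have SA : ∑ k ∈ range (M+1+1), (-1:ℚ)^(M+1-k) * ((M+1).choose k) * Cb ((n:ℤ)-1-k) ((M+1:ℕ):ℤ)
      = (-1:ℚ)^(M+1) := by
    have e : ∀ k ∈ range (M+1+1), (-1:ℚ)^(M+1-k) * ((M+1).choose k) * Cb ((n:ℤ)-1-k) ((M+1:ℕ):ℤ)
        = (-1:ℚ)^(M+1) * ((-1:ℚ)^k * ((M+1).choose k) * Cb (((n:ℤ)-1) - k) ((M+1:ℕ):ℤ)) := by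
      intro k hk
      rw [Finset.mem_range] at hk
      rw [negpow k (M+1) (by omega), show (n:ℤ)-1-(k:ℤ) = ((n:ℤ)-1) - k by ring]
      ring
    rw [Finset.sum_congr rfl e, ← Finset.mul_sum,
      diffL (M+1) ((n:ℤ)-1) ((M+1:ℕ):ℤ) (by omega)]
    rw [sub_self, Cb_zero_right (by push_cast; omega), mul_one]
  have SB : ∑ k ∈ range (M+1+1), (-1:ℚ)^(M+1-k) * (M.choose k) * Cb ((n:ℤ)-1-k) ((M:ℕ):ℤ)
      = (-1:ℚ)^(M+1) := by
    rw [Finset.sum_range_succ, Nat.choose_succ_self]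
    simp only [Nat.cast_zero, mul_zero, zero_mul, add_zero]
    have e : ∀ k ∈ range (M+1), (-1:ℚ)^(M+1-k) * (M.choose k) * Cb ((n:ℤ)-1-k) ((M:ℕ):ℤ)
        = (-(-1:ℚ)^M) * ((-1:ℚ)^k * (M.choose k) * Cb (((n:ℤ)-1) - k) ((M:ℕ):ℤ)) := by
      intro k hk
      rw [Finset.mem_range] at hk
      rw [show M+1-k = (M-k)+1 by omega, pow_succ, negpow k M (by omega),
        show (n:ℤ)-1-(k:ℤ) = ((n:ℤ)-1) - k by ring]
      ring
    rw [Finset.sum_congr rfl e, ← Finset.mul_sum,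
      diffL M ((n:ℤ)-1) ((M:ℕ):ℤ) (by omega)]
    rw [sub_self, Cb_zero_right (by omega), mul_one, pow_succ]
    ring
  rw [SA, SB, sub_self]

lemma tri {M : Type*} [AddCommMonoid M] (K : ℕ) (f : ℕ → ℕ → M) :
    ∑ k ∈ range (K+1), ∑ j ∈ range (K - k + 1), f k j
      = ∑ m ∈ range (K+1), ∑ k ∈ range (m+1), f k (m - k) := by
  rw [Finset.sum_sigma', Finset.sum_sigma']
  refine Finset.sum_nbij' (fun p => ⟨p.1 + p.2, p.1⟩) (fun p => ⟨p.2, p.1 - p.2⟩) ?_ ?_ ?_ ?_ ?_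
  · rintro ⟨x, y⟩ ha; simp only [Finset.mem_sigma, Finset.mem_range] at *; omega
  · rintro ⟨x, y⟩ ha; simp only [Finset.mem_sigma, Finset.mem_range] at *; omega
  · rintro ⟨x, y⟩ ha; simp only [Finset.mem_sigma, Finset.mem_range] at ha
    dsimp only
    rw [show x + y - x = y by omega]
  · rintro ⟨x, y⟩ ha; simp only [Finset.mem_sigma, Finset.mem_range] at ha
    dsimp only
    rw [show y + (x - y) = x by omega]
  · rintro ⟨x, y⟩ ha; simp only [Finset.mem_sigma, Finset.mem_range] at ha
    dsimp only
    congr 1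
    omega

/-- `𝒬_0(x) = 1` and
`𝒬_n(x) = Σ_{j=0}^{⌊(n-1)/2⌋} (-1)^j (C(n-1,j) - C(n-1,j-1)) x^{n-2j}` for `n ≥ 1`. -/
noncomputable def QQ : ℕ → Polynomial ℚ
  | 0 => 1
  | (n + 1) =>
      ∑ j ∈ Finset.range (n / 2 + 1),
        Polynomial.C ((-1 : ℚ) ^ j * (Cb n j - Cb n ((j : ℤ) - 1))) *
          Polynomial.X ^ (n + 1 - 2 * j)

/-- For every `n ≥ 1`, `x^n = Σ_{k=0}^{⌊(n-1)/2⌋} C(n-1-k, k) · 𝒬_{n-2k}(x)`. -/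
theorem stmt6 (n : ℕ) (hn : 1 ≤ n) :
    (Polynomial.X : Polynomial ℚ) ^ n =
      ∑ k ∈ Finset.range ((n - 1) / 2 + 1),
        Polynomial.C (Cb ((n : ℤ) - 1 - k) k) * QQ (n - 2 * k) := by
  set K := (n - 1) / 2 with hK
  have expand : ∀ k ∈ range (K+1),
      Polynomial.C (Cb ((n:ℤ)-1-k) k) * QQ (n - 2*k)
        = ∑ j ∈ range (K - k + 1),
            Polynomial.C (Cb ((n:ℤ)-1-k) k * ((-1:ℚ)^j *
              (Cb ((n-2*k-1 : ℕ) : ℤ) ((j : ℕ) : ℤ) - Cb ((n-2*k-1 : ℕ) : ℤ) (((j:ℕ) : ℤ) - 1))))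
              * Polynomial.X ^ (n - 2*k - 2*j) := by
    intro k hk
    rw [Finset.mem_range] at hk
    have h2k : 2*k + 1 ≤ n := by omega
    rw [show n - 2*k = (n - 2*k - 1) + 1 by omega, QQ]
    rw [show (n-2*k-1)/2 = K - k by omega, Finset.mul_sum]
    refine Finset.sum_congr rfl fun j hj => ?_
    rw [Finset.mem_range] at hj
    rw [← mul_assoc, ← Polynomial.C_mul]
    congr 2
  rw [Finset.sum_congr rfl expand, tri]
  have inner : ∀ m ∈ range (K+1),
      (∑ k ∈ range (m+1),
          Polynomial.C (Cb ((n:ℤ)-1-k) k * ((-1:ℚ)^(m-k) *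
            (Cb ((n-2*k-1 : ℕ) : ℤ) ((m - k : ℕ) : ℤ) - Cb ((n-2*k-1 : ℕ) : ℤ) (((m-k:ℕ) : ℤ) - 1))))
            * Polynomial.X ^ (n - 2*k - 2*(m-k)))
        = if m = 0 then Polynomial.X ^ n else 0 := by
    intro m hm
    rw [Finset.mem_range] at hm
    have h2m : 2*m + 1 ≤ n := by omega
    have expo : ∀ k ∈ range (m+1),
        Polynomial.C (Cb ((n:ℤ)-1-k) k * ((-1:ℚ)^(m-k) *
            (Cb ((n-2*k-1 : ℕ) : ℤ) ((m - k : ℕ) : ℤ) - Cb ((n-2*k-1 : ℕ) : ℤ) (((m-k:ℕ) : ℤ) - 1))))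
            * Polynomial.X ^ (n - 2*k - 2*(m-k))
          = Polynomial.C (Cb ((n:ℤ)-1-k) k * ((-1:ℚ)^(m-k) *
            (Cb ((n-2*k-1 : ℕ) : ℤ) ((m - k : ℕ) : ℤ) - Cb ((n-2*k-1 : ℕ) : ℤ) (((m-k:ℕ) : ℤ) - 1))))
            * Polynomial.X ^ (n - 2*m) := by
      intro k hk
      rw [Finset.mem_range] at hk
      congr 2
      omega
    rw [Finset.sum_congr rfl expo, ← Finset.sum_mul, ← map_sum, key n m h2m]
    rcases eq_or_ne m 0 with rfl | hm0
    · simp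
    · rw [if_neg hm0, if_neg hm0, map_zero, zero_mul]
  rw [Finset.sum_congr rfl inner, Finset.sum_ite_eq' (range (K+1)) 0 (fun _ => Polynomial.X ^ n)]
  simp
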